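/- For $0 < H \leq 1$, the kernel $C^H(s,t) = \frac{1}{2}(|s|^{2H} + |t|^{2H} - |s-t|^{2H})$ on $\mathbb{R}$ is positive (semi)definite: for all $t_1,\dots,t_n \in \mathbb{R}$ and $c_1,\dots,c_n \in \mathbb{C}$ one has $\sum_{j,k} c_j \overline{c_k} C^H(t_j,t_k) \geq 0$. -/

import Mathlib

/-- Covariance kernel of fractional Brownian motion with Hurst index `H`. -/
noncomputable def fbmKernel (H s t : ℝ) : ℝ :=
  (|s| ^ (2 * H) + |t| ^ (2 * H) - |s - t| ^ (2 * H)) / 2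

open MeasureTheory Real Set


lemma kern_integrable {α : ℝ} (hα0 : 0 < α) (hα2 : α < 2) (x : ℝ) :
    IntegrableOn (fun u : ℝ => (1 - Real.cos (x * u)) * u ^ (-1 - α)) (Ioi 0) := by
  have hmeas : ∀ s : Set ℝ, s ⊆ Ioi 0 → MeasurableSet s →
      AEStronglyMeasurable (fun u : ℝ => (1 - Real.cos (x * u)) * u ^ (-1 - α))
        (volume.restrict s) := by
    intro s hs hms
    apply ContinuousOn.aestronglyMeasurable ?_ hms
    apply ContinuousOn.mul
    · exact (continuous_const.sub (Real.continuous_cos.comp (continuous_const.mul continuous_id))).continuousOn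
    · exact fun u hu => (Real.continuousAt_rpow_const u _ (Or.inl (ne_of_gt (hs hu)))).continuousWithinAt
  have h1 : IntegrableOn (fun u : ℝ => (1 - Real.cos (x * u)) * u ^ (-1 - α)) (Ioc 0 1) := by
    have hdom : IntegrableOn (fun u : ℝ => (x ^ 2 / 2) * u ^ (1 - α)) (Ioc 0 1) := by
      apply Integrable.const_mul
      have := (intervalIntegral.intervalIntegrable_rpow' (a := 0) (b := 1) (r := 1 - α) (by linarith))
      rw [intervalIntegrable_iff_integrableOn_Ioc_of_le (by norm_num)] at this
      exact this
    apply Integrable.mono hdom (hmeas _ Ioc_subset_Ioi_self measurableSet_Ioc)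
    filter_upwards [ae_restrict_mem measurableSet_Ioc] with u hu
    have hu0 : 0 < u := hu.1
    have h1c : 0 ≤ 1 - Real.cos (x * u) := by nlinarith [Real.cos_le_one (x * u)]
    have hb : 1 - Real.cos (x * u) ≤ (x * u) ^ 2 / 2 := by
      nlinarith [Real.one_sub_sq_div_two_le_cos (x := x * u)]
    rw [Real.norm_eq_abs, Real.norm_eq_abs, abs_mul, abs_of_nonneg h1c,
      abs_of_nonneg (Real.rpow_nonneg hu0.le _)]
    rw [abs_of_nonneg (by positivity)]
    calc (1 - Real.cos (x * u)) * u ^ (-1 - α) ≤ ((x * u) ^ 2 / 2) * u ^ (-1 - α) := by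
          apply mul_le_mul_of_nonneg_right hb (Real.rpow_nonneg hu0.le _)
      _ = (x ^ 2 / 2) * (u ^ (2:ℝ) * u ^ (-1 - α)) := by
          rw [mul_pow, ← Real.rpow_natCast u 2]; push_cast; ring
      _ = (x ^ 2 / 2) * u ^ (1 - α) := by
          rw [← Real.rpow_add hu0]; ring_nf
  have h2 : IntegrableOn (fun u : ℝ => (1 - Real.cos (x * u)) * u ^ (-1 - α)) (Ioi 1) := by
    have hdom : IntegrableOn (fun u : ℝ => 2 * u ^ (-1 - α)) (Ioi 1) :=
      (integrableOn_Ioi_rpow_of_lt (by linarith) one_pos).const_mul 2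
    apply Integrable.mono hdom (hmeas _ (fun u (hu : u ∈ Ioi 1) => Set.mem_Ioi.mpr (lt_trans one_pos (Set.mem_Ioi.mp hu))) measurableSet_Ioi)
    filter_upwards [ae_restrict_mem measurableSet_Ioi] with u hu
    have hu0 : (0:ℝ) < u := lt_trans one_pos hu
    have h1c : 0 ≤ 1 - Real.cos (x * u) := by nlinarith [Real.cos_le_one (x * u)]
    have h2c : 1 - Real.cos (x * u) ≤ 2 := by nlinarith [Real.neg_one_le_cos (x * u)]
    rw [Real.norm_eq_abs, Real.norm_eq_abs, abs_mul, abs_of_nonneg h1c,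
      abs_of_nonneg (Real.rpow_nonneg hu0.le _), abs_of_nonneg (by positivity)]
    exact mul_le_mul_of_nonneg_right h2c (Real.rpow_nonneg hu0.le _)
  have := h1.union h2
  rwa [Ioc_union_Ioi_eq_Ioi (by norm_num : (0:ℝ) ≤ 1)] at this

lemma I_pos {α : ℝ} (hα0 : 0 < α) (hα2 : α < 2) :
    0 < ∫ u in Ioi (0:ℝ), (1 - Real.cos u) * u ^ (-1 - α) := by
  have hint : IntegrableOn (fun u : ℝ => (1 - Real.cos u) * u ^ (-1 - α)) (Ioi 0) := by
    have := kern_integrable hα0 hα2 1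
    simpa using this
  have hnn : 0 ≤ᵐ[volume.restrict (Ioi (0:ℝ))]
      fun u : ℝ => (1 - Real.cos u) * u ^ (-1 - α) := by
    filter_upwards [ae_restrict_mem measurableSet_Ioi] with u hu
    have h : 0 ≤ 1 - Real.cos u := by nlinarith [Real.cos_le_one u]
    exact mul_nonneg h (Real.rpow_nonneg (le_of_lt hu) _)
  rw [setIntegral_pos_iff_support_of_nonneg_ae hnn hint]
  have hsub : Ioo (π/2) π ⊆
      Function.support (fun u : ℝ => (1 - Real.cos u) * u ^ (-1 - α)) ∩ Ioi 0 := by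
    intro u hu
    have hu0 : 0 < u := lt_trans (by positivity) hu.1
    constructor
    · have hc : Real.cos u ≤ 0 :=
        Real.cos_nonpos_of_pi_div_two_le_of_le hu.1.le (by linarith [hu.2, Real.pi_pos])
      have h1 : 0 < 1 - Real.cos u := by linarith
      have h2 : 0 < u ^ (-1 - α) := Real.rpow_pos_of_pos hu0 _
      exact ne_of_gt (by positivity)
    · exact hu0
  calc (0:ENNReal) < volume (Ioo (π/2) π) := by
        rw [Real.volume_Ioo]
        simp only [ENNReal.ofReal_pos]
        linarith [Real.pi_pos]
    _ ≤ _ := measure_mono hsub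

lemma kern_scaling {α : ℝ} (hα0 : 0 < α) (hα2 : α < 2) (x : ℝ) :
    ∫ u in Ioi (0:ℝ), (1 - Real.cos (x * u)) * u ^ (-1 - α)
      = |x| ^ α * ∫ u in Ioi (0:ℝ), (1 - Real.cos u) * u ^ (-1 - α) := by
  rcases eq_or_ne x 0 with rfl | hx
  · simp [Real.rpow_natCast]
    rw [Real.zero_rpow (ne_of_gt hα0)]
    simp
  · set b := |x| with hb
    have hb0 : 0 < b := abs_pos.mpr hx
    have hcong : ∫ u in Ioi (0:ℝ), (1 - Real.cos (x * u)) * u ^ (-1 - α)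
        = ∫ u in Ioi (0:ℝ), b ^ (1 + α) * ((1 - Real.cos (b * u)) * (b * u) ^ (-1 - α)) := by
      apply setIntegral_congr_fun measurableSet_Ioi
      intro u hu
      have hu0 : (0:ℝ) < u := hu
      simp only
      have hcos : Real.cos (x * u) = Real.cos (b * u) := by
        rcases abs_cases x with ⟨h, _⟩ | ⟨h, _⟩
        · rw [hb, h]
        · rw [hb, h, neg_mul, Real.cos_neg]
      rw [hcos, Real.mul_rpow hb0.le hu0.le]
      have hbb : b ^ (1+α) * b ^ (-1-α) = 1 := by
        rw [← Real.rpow_add hb0]; norm_num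
      rw [show b ^ (1+α) * ((1 - Real.cos (b*u)) * (b ^ (-1-α) * u ^ (-1-α)))
          = (b ^ (1+α) * b ^ (-1-α)) * ((1 - Real.cos (b*u)) * u ^ (-1-α)) from by ring,
        hbb, one_mul]
    rw [hcong, integral_const_mul,
      integral_comp_mul_left_Ioi (fun v => (1 - Real.cos v) * v ^ (-1 - α)) 0 hb0]
    rw [mul_zero, smul_eq_mul, ← mul_assoc]
    congr 1
    rw [← Real.rpow_neg_one b, ← Real.rpow_add hb0]
    norm_num

lemma negdef {α : ℝ} (hα0 : 0 < α) (hα2 : α ≤ 2) {m : ℕ} (s : Fin m → ℝ) (b : Fin m → ℝ)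
    (hb : ∑ j, b j = 0) :
    ∑ j, ∑ k, b j * b k * |s j - s k| ^ α ≤ 0 := by
  rcases eq_or_lt_of_le hα2 with rfl | hα2'
  · -- α = 2
    have habs : ∀ x : ℝ, |x| ^ (2:ℝ) = x ^ (2:ℕ) := fun x => by
      rw [Real.rpow_two, sq_abs]
    calc ∑ j, ∑ k, b j * b k * |s j - s k| ^ (2:ℝ)
        = ∑ j, ∑ k, (b j * s j ^ 2 * b k + b j * (b k * s k ^ 2)
            - 2 * ((b j * s j) * (b k * s k))) := by
          refine Finset.sum_congr rfl fun j _ => Finset.sum_congr rfl fun k _ => ?_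
          rw [habs]; ring
      _ = (∑ j, b j * s j ^ 2) * (∑ k, b k) + (∑ j, b j) * (∑ k, b k * s k ^ 2)
            - 2 * ((∑ j, b j * s j) * (∑ k, b k * s k)) := by
          simp only [Finset.sum_add_distrib, Finset.sum_sub_distrib, ← Finset.sum_mul,
            ← Finset.mul_sum]
      _ = -(2 * (∑ j, b j * s j) ^ 2) := by rw [hb]; ring
      _ ≤ 0 := neg_nonpos.mpr (by positivity)
  · -- α < 2
    set I := ∫ u in Ioi (0:ℝ), (1 - Real.cos u) * u ^ (-1 - α) with hI
    have hIpos := I_pos hα0 hα2'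
    set S := ∑ j, ∑ k, b j * b k * |s j - s k| ^ α with hS
    have hint : ∀ x : ℝ, IntegrableOn
        (fun u : ℝ => (1 - Real.cos (x * u)) * u ^ (-1 - α)) (Ioi 0) :=
      kern_integrable hα0 hα2'
    have key : S * I = ∫ u in Ioi (0:ℝ),
        ∑ j, ∑ k, b j * b k * ((1 - Real.cos ((s j - s k) * u)) * u ^ (-1 - α)) := by
      rw [hS, Finset.sum_mul]
      rw [integral_finset_sum _ (fun j _ => integrable_finset_sum _
        (fun k _ => ((hint (s j - s k)).const_mul _)))]
      refine Finset.sum_congr rfl fun j _ => ?_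
      rw [Finset.sum_mul, integral_finset_sum _ (fun k _ => ((hint (s j - s k)).const_mul _))]
      refine Finset.sum_congr rfl fun k _ => ?_
      rw [mul_assoc, ← kern_scaling hα0 hα2', MeasureTheory.integral_const_mul]
    have hptwise : ∀ u ∈ Ioi (0:ℝ),
        ∑ j, ∑ k, b j * b k * ((1 - Real.cos ((s j - s k) * u)) * u ^ (-1 - α)) ≤ 0 := by
      intro u hu
      have hu0 : (0:ℝ) < u := hu
      have hexp : ∀ j k : Fin m,
          b j * b k * (1 - Real.cos ((s j - s k) * u))
            = b j * b k - ((b j * Real.cos (s j * u)) * (b k * Real.cos (s k * u))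
              + (b j * Real.sin (s j * u)) * (b k * Real.sin (s k * u))) := by
        intro j k
        rw [show (s j - s k) * u = s j * u - s k * u from by ring, Real.cos_sub]
        ring
      have hsum : ∑ j, ∑ k, b j * b k * (1 - Real.cos ((s j - s k) * u))
          = - ((∑ j, b j * Real.cos (s j * u)) ^ 2 + (∑ j, b j * Real.sin (s j * u)) ^ 2) := by
        calc ∑ j, ∑ k, b j * b k * (1 - Real.cos ((s j - s k) * u))
            = ∑ j, ∑ k, (b j * b k - ((b j * Real.cos (s j * u)) * (b k * Real.cos (s k * u))
              + (b j * Real.sin (s j * u)) * (b k * Real.sin (s k * u)))) := by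
              exact Finset.sum_congr rfl fun j _ => Finset.sum_congr rfl fun k _ => hexp j k
          _ = (∑ j, b j) * (∑ k, b k) - ((∑ j, b j * Real.cos (s j * u)) * (∑ k, b k * Real.cos (s k * u))
              + (∑ j, b j * Real.sin (s j * u)) * (∑ k, b k * Real.sin (s k * u))) := by
              simp only [Finset.sum_sub_distrib, Finset.sum_add_distrib, ← Finset.sum_mul,
                ← Finset.mul_sum]
          _ = _ := by rw [hb]; ring
      calc ∑ j, ∑ k, b j * b k * ((1 - Real.cos ((s j - s k) * u)) * u ^ (-1 - α))
          = (∑ j, ∑ k, b j * b k * (1 - Real.cos ((s j - s k) * u))) * u ^ (-1 - α) := by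
            rw [Finset.sum_mul]
            refine Finset.sum_congr rfl fun j _ => ?_
            rw [Finset.sum_mul]
            exact Finset.sum_congr rfl fun k _ => by ring
        _ = - ((∑ j, b j * Real.cos (s j * u)) ^ 2 + (∑ j, b j * Real.sin (s j * u)) ^ 2)
              * u ^ (-1 - α) := by rw [hsum]
        _ ≤ 0 := by
            apply mul_nonpos_of_nonpos_of_nonneg
            · simp only [neg_nonpos]; positivity
            · exact Real.rpow_nonneg hu0.le _
    have hSI : S * I ≤ 0 := by
      rw [key]
      exact setIntegral_nonpos measurableSet_Ioi hptwise
    nlinarith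

lemma posdef_real (H : ℝ) (hH0 : 0 < H) (hH1 : H ≤ 1) (n : ℕ)
    (t : Fin n → ℝ) (a : Fin n → ℝ) :
    0 ≤ ∑ j, ∑ k, a j * a k * fbmKernel H (t j) (t k) := by
  have hα0 : 0 < 2 * H := by positivity
  have hα2 : 2 * H ≤ 2 := by linarith
  set σ := ∑ j, a j with hσ
  set T := ∑ j, a j * |t j| ^ (2*H) with hT
  set P := ∑ j, ∑ k, a j * a k * |t j - t k| ^ (2*H) with hP
  set b : Fin (n+1) → ℝ := Fin.cons (-σ) a with hbdef
  set s' : Fin (n+1) → ℝ := Fin.cons 0 t with hsdef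
  have hQ := negdef hα0 hα2 s' b (by rw [hbdef, Fin.sum_cons, hσ]; ring)
  have key : ∑ j, ∑ k, b j * b k * |s' j - s' k| ^ (2*H)
      = P - 2 * (σ * T) := by
    rw [hbdef, hsdef]
    simp only [Fin.sum_univ_succ, Fin.cons_zero, Fin.cons_succ, sub_zero, zero_sub,
      abs_neg, sub_self, abs_zero, Real.zero_rpow (ne_of_gt hα0), mul_zero, zero_add]
    rw [Finset.sum_add_distrib]
    have h1 : ∑ x : Fin n, -σ * a x * |t x| ^ (2*H) + σ * T = 0 := by
      rw [hT, Finset.mul_sum, ← Finset.sum_add_distrib]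
      apply Finset.sum_eq_zero; intros; ring
    have h3 : ∑ x : Fin n, a x * -σ * |t x| ^ (2*H) + σ * T = 0 := by
      rw [hT, Finset.mul_sum, ← Finset.sum_add_distrib]
      apply Finset.sum_eq_zero; intros; ring
    rw [← hP]
    linarith
  have expand : ∑ j, ∑ k, a j * a k * fbmKernel H (t j) (t k)
      = (σ * T + T * σ - P) / 2 := by
    have step : ∀ j k : Fin n, a j * a k * fbmKernel H (t j) (t k)
        = (a j * (a k * |t k| ^ (2*H)) + (a j * |t j| ^ (2*H)) * a k
          - a j * a k * |t j - t k| ^ (2*H)) / 2 := by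
      intro j k; unfold fbmKernel; ring
    calc ∑ j, ∑ k, a j * a k * fbmKernel H (t j) (t k)
        = ∑ j, ∑ k, (a j * (a k * |t k| ^ (2*H)) + (a j * |t j| ^ (2*H)) * a k
          - a j * a k * |t j - t k| ^ (2*H)) / 2 :=
          Finset.sum_congr rfl fun j _ => Finset.sum_congr rfl fun k _ => step j k
      _ = (∑ j, ∑ k, (a j * (a k * |t k| ^ (2*H)) + (a j * |t j| ^ (2*H)) * a k
          - a j * a k * |t j - t k| ^ (2*H))) / 2 := by
          rw [Finset.sum_div]
          exact Finset.sum_congr rfl fun j _ => (Finset.sum_div _ _ _).symm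
      _ = (σ * T + T * σ - P) / 2 := by
          simp only [Finset.sum_sub_distrib, Finset.sum_add_distrib, ← Finset.mul_sum,
            ← Finset.sum_mul, hP, hT, hσ]
  rw [expand]
  rw [key] at hQ
  linarith

lemma fbm_symm (H s t : ℝ) : fbmKernel H s t = fbmKernel H t s := by
  unfold fbmKernel; rw [abs_sub_comm]; ring

open scoped ComplexOrder in
theorem stmt0 (H : ℝ) (hH0 : 0 < H) (hH1 : H ≤ 1) (n : ℕ)
    (t : Fin n → ℝ) (c : Fin n → ℂ) :
    0 ≤ ∑ j, ∑ k, c j * (starRingEnd ℂ) (c k) * (fbmKernel H (t j) (t k) : ℂ) := by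
  rw [Complex.le_def]
  constructor
  · -- real part nonneg
    have hre : (∑ j, ∑ k, c j * (starRingEnd ℂ) (c k) * (fbmKernel H (t j) (t k) : ℂ)).re
        = ∑ j, ∑ k, ((c j).re * (c k).re * fbmKernel H (t j) (t k)
            + (c j).im * (c k).im * fbmKernel H (t j) (t k)) := by
      rw [Complex.re_sum]
      refine Finset.sum_congr rfl fun j _ => ?_
      rw [Complex.re_sum]
      refine Finset.sum_congr rfl fun k _ => ?_
      rw [Complex.mul_re, Complex.mul_re, Complex.mul_im, Complex.ofReal_re,
        Complex.ofReal_im, Complex.conj_re, Complex.conj_im]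
      ring
    rw [Complex.zero_re, hre]
    simp only [Finset.sum_add_distrib]
    exact add_nonneg (posdef_real H hH0 hH1 n t (fun j => (c j).re))
      (posdef_real H hH0 hH1 n t (fun j => (c j).im))
  · -- imaginary part zero
    have him : (∑ j, ∑ k, c j * (starRingEnd ℂ) (c k) * (fbmKernel H (t j) (t k) : ℂ)).im
        = ∑ j, ∑ k, ((c j).im * (c k).re - (c j).re * (c k).im) * fbmKernel H (t j) (t k) := by
      rw [Complex.im_sum]
      refine Finset.sum_congr rfl fun j _ => ?_
      rw [Complex.im_sum]
      refine Finset.sum_congr rfl fun k _ => ?_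
      rw [Complex.mul_im, Complex.mul_re, Complex.mul_im, Complex.ofReal_re,
        Complex.ofReal_im, Complex.conj_re, Complex.conj_im]
      ring
    rw [Complex.zero_im, him]
    set S := ∑ j, ∑ k, ((c j).im * (c k).re - (c j).re * (c k).im) * fbmKernel H (t j) (t k)
      with hS
    have h1 : S = ∑ j, ∑ k, ((c k).im * (c j).re - (c k).re * (c j).im)
        * fbmKernel H (t k) (t j) := by
      rw [hS]; exact Finset.sum_comm
    have h2 : S + S = 0 := by
      nth_rewrite 1 [h1]
      rw [hS, ← Finset.sum_add_distrib]
      apply Finset.sum_eq_zero; intro j _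
      rw [← Finset.sum_add_distrib]
      apply Finset.sum_eq_zero; intro k _
      rw [fbm_symm H (t k) (t j)]
      ring
    linarith
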